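/- Let N ∈ ℕ, let V : ℝ^N → [1,∞) be convex, let Γ be a symmetric invertible N×N real matrix, and let f : ℝ^N → ℝ be continuously differentiable. Then, as an identity in [0,∞], sup_{x ∈ ℝ^N} |Γ ∇f(x)| / V(x) = sup { (V(y₁) ∨ V(y₂))^{-1} · |f(y₁) − f(y₂)| / |Γ^{-1}(y₁ − y₂)| : y₁, y₂ ∈ ℝ^N, y₁ ≠ y₂ }. -/

import Mathlib

open scoped ENNReal

section Aux

variable {N : ℕ}

noncomputable def toE (v : Fin N → ℝ) : EuclideanSpace ℝ (Fin N) :=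
  (WithLp.equiv 2 (Fin N → ℝ)).symm v

noncomputable def nrm (v : Fin N → ℝ) : ℝ := Real.sqrt (∑ i, v i ^ 2)

lemma nrm_eq_norm (v : Fin N → ℝ) : nrm v = ‖toE v‖ := by
  rw [EuclideanSpace.norm_eq, nrm]
  congr 1
  refine Finset.sum_congr rfl fun i _ => ?_
  rw [Real.norm_eq_abs, sq_abs]
  rfl

lemma nrm_nonneg (v : Fin N → ℝ) : 0 ≤ nrm v := Real.sqrt_nonneg _

lemma nrm_eq_zero_iff (v : Fin N → ℝ) : nrm v = 0 ↔ v = 0 := by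
  rw [nrm_eq_norm, norm_eq_zero]
  constructor
  · intro h; funext i
    have := congrFun (congrArg (WithLp.equiv 2 (Fin N → ℝ)) h) i
    simpa [toE] using this
  · rintro rfl; rfl

lemma cauchy (v w : Fin N → ℝ) : |∑ i, v i * w i| ≤ nrm v * nrm w := by
  have h : (∑ i, v i * w i) = (inner ℝ (toE v) (toE w) : ℝ) := by
    rw [PiLp.inner_apply]
    simp [toE, mul_comm]
  rw [h, nrm_eq_norm, nrm_eq_norm]
  exact abs_real_inner_le_norm _ _

end Aux

section Aux2

variable {N : ℕ}

lemma nrm_smul (t : ℝ) (v : Fin N → ℝ) : nrm (t • v) = |t| * nrm v := by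
  simp only [nrm_eq_norm]
  have : toE (t • v) = t • toE v := rfl
  rw [this, norm_smul, Real.norm_eq_abs]

lemma euclid_decomp (v : EuclideanSpace ℝ (Fin N)) :
    v = ∑ j, v j • EuclideanSpace.single j (1 : ℝ) := by
  ext i
  have : (∑ j, v j • EuclideanSpace.single j (1:ℝ)) i
      = ∑ j, (v j • EuclideanSpace.single j (1:ℝ)) i := by
    rw [WithLp.ofLp_sum]; exact Finset.sum_apply i Finset.univ _
  rw [this]
  simp [EuclideanSpace.single_apply]

lemma fderiv_expand (f : EuclideanSpace ℝ (Fin N) → ℝ) (x : EuclideanSpace ℝ (Fin N))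
    (v : EuclideanSpace ℝ (Fin N)) :
    fderiv ℝ f x v = ∑ j, v j * fderiv ℝ f x (EuclideanSpace.single j 1) := by
  conv_lhs => rw [euclid_decomp v]
  rw [map_sum]
  refine Finset.sum_congr rfl fun j _ => ?_
  rw [(fderiv ℝ f x).map_smul, smul_eq_mul]

lemma dot_symm_swap {Γ : Matrix (Fin N) (Fin N) ℝ} (hΓ : Γ.IsSymm) (g w : Fin N → ℝ) :
    ∑ j, (Γ.mulVec w) j * g j = ∑ i, (Γ.mulVec g) i * w i := by
  simp only [Matrix.mulVec, dotProduct, Finset.sum_mul]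
  rw [Finset.sum_comm]
  refine Finset.sum_congr rfl fun i _ => Finset.sum_congr rfl fun j _ => ?_
  have : Γ j i = Γ i j := by
    conv_lhs => rw [← hΓ]
    rfl
  rw [this]; ring

end Aux2

section Aux3

variable {N : ℕ}

lemma key_fderiv (f : EuclideanSpace ℝ (Fin N) → ℝ) (x : EuclideanSpace ℝ (Fin N))
    {Γ : Matrix (Fin N) (Fin N) ℝ} (hΓ : Γ.IsSymm) (w : Fin N → ℝ) :
    fderiv ℝ f x (toE (Γ.mulVec w)) =
      ∑ i, (Γ.mulVec (fun j => fderiv ℝ f x (EuclideanSpace.single j 1))) i * w i := by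
  rw [fderiv_expand]
  exact dot_symm_swap hΓ _ w

lemma mvt_bound (V : EuclideanSpace ℝ (Fin N) → ℝ)
    (hVconv : ConvexOn ℝ Set.univ V)
    {Γ : Matrix (Fin N) (Fin N) ℝ} (hΓsymm : Γ.IsSymm) (hΓinv : IsUnit Γ.det)
    (f : EuclideanSpace ℝ (Fin N) → ℝ) (hf : ContDiff ℝ 1 f)
    (C : ℝ) (hC : 0 ≤ C)
    (hb : ∀ x, nrm (Γ.mulVec (fun j => fderiv ℝ f x (EuclideanSpace.single j 1))) ≤ C * V x)
    (y₁ y₂ : EuclideanSpace ℝ (Fin N)) :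
    |f y₁ - f y₂| ≤ C * (max (V y₁) (V y₂)) *
      nrm (Γ⁻¹.mulVec (fun j => y₁ j - y₂ j)) := by
  set w : Fin N → ℝ := Γ⁻¹.mulVec (fun j => y₁ j - y₂ j) with hw
  have hgw : toE (Γ.mulVec w) = y₁ - y₂ := by
    rw [hw, Matrix.mulVec_mulVec, Matrix.mul_nonsing_inv _ hΓinv, Matrix.one_mulVec]
    ext i
    rfl
  set γ : ℝ → EuclideanSpace ℝ (Fin N) := fun t => y₂ + t • (y₁ - y₂) with hγ
  have hdγ : ∀ t : ℝ, HasDerivAt γ (y₁ - y₂) t := fun t => by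
    have h := ((hasDerivAt_id t).smul_const (y₁ - y₂)).const_add y₂
    rw [one_smul] at h; exact h
  have hdφ : ∀ t : ℝ, HasDerivAt (fun s => f (γ s)) (fderiv ℝ f (γ t) (y₁ - y₂)) t :=
    fun t => ((hf.differentiable one_ne_zero (γ t)).hasFDerivAt).comp_hasDerivAt t (hdγ t)
  set B : ℝ := C * (max (V y₁) (V y₂)) * nrm w with hB
  have hbd : ∀ t ∈ Set.Icc (0:ℝ) 1, ‖fderiv ℝ f (γ t) (y₁ - y₂)‖ ≤ B := by
    intro t ht
    rw [Real.norm_eq_abs, ← hgw, key_fderiv f (γ t) hΓsymm w]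
    have h1 := cauchy (Γ.mulVec (fun j => fderiv ℝ f (γ t) (EuclideanSpace.single j 1))) w
    have h2 := hb (γ t)
    have hVt : V (γ t) ≤ max (V y₁) (V y₂) := by
      have hγt : γ t = t • y₁ + (1 - t) • y₂ := by
        rw [hγ]; module
      have := hVconv.2 (Set.mem_univ y₁) (Set.mem_univ y₂) ht.1
        (by linarith [ht.2] : (0:ℝ) ≤ 1 - t) (by ring)
      rw [← hγt] at this
      calc V (γ t) ≤ t • V y₁ + (1 - t) • V y₂ := this
        _ ≤ t * max (V y₁) (V y₂) + (1 - t) * max (V y₁) (V y₂) := by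
            have := le_max_left (V y₁) (V y₂); have := le_max_right (V y₁) (V y₂)
            simp only [smul_eq_mul]
            gcongr <;> [exact ht.1; linarith [ht.2]]
        _ = max (V y₁) (V y₂) := by ring
    calc |∑ i, (Γ.mulVec (fun j => fderiv ℝ f (γ t) (EuclideanSpace.single j 1))) i * w i|
        ≤ nrm (Γ.mulVec (fun j => fderiv ℝ f (γ t) (EuclideanSpace.single j 1))) * nrm w := h1
      _ ≤ (C * V (γ t)) * nrm w := by gcongr; exact nrm_nonneg w
      _ ≤ B := by rw [hB]; gcongr; exact nrm_nonneg w
  have hmvt := (convex_Icc (0:ℝ) 1).norm_image_sub_le_of_norm_hasDerivWithin_le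
    (f := fun s => f (γ s)) (f' := fun t => fderiv ℝ f (γ t) (y₁ - y₂))
    (fun t _ => (hdφ t).hasDerivWithinAt) hbd
    (Set.left_mem_Icc.2 zero_le_one) (Set.right_mem_Icc.2 zero_le_one)
  have hγ1 : γ 1 = y₁ := by rw [hγ]; simp
  have hγ0 : γ 0 = y₂ := by rw [hγ]; simp
  simp only [hγ1, hγ0, Real.norm_eq_abs] at hmvt
  calc |f y₁ - f y₂| ≤ B * |1 - 0| := hmvt
    _ = B := by norm_num

end Aux3

section Aux4

variable {N : ℕ}

lemma nrm_sq (v : Fin N → ℝ) : ∑ i, v i ^ 2 = nrm v ^ 2 := by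
  rw [nrm, Real.sq_sqrt]
  exact Finset.sum_nonneg fun i _ => sq_nonneg _

lemma part1 (V : EuclideanSpace ℝ (Fin N) → ℝ)
    (hV1 : ∀ x, 1 ≤ V x)
    (hVconv : ConvexOn ℝ Set.univ V)
    {Γ : Matrix (Fin N) (Fin N) ℝ} (hΓsymm : Γ.IsSymm) (hΓinv : IsUnit Γ.det)
    (f : EuclideanSpace ℝ (Fin N) → ℝ) (hf : ContDiff ℝ 1 f)
    (x : EuclideanSpace ℝ (Fin N)) :
    ENNReal.ofReal
        (nrm (Γ.mulVec (fun j => fderiv ℝ f x (EuclideanSpace.single j 1))) / V x) ≤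
      ⨆ (y₁ : EuclideanSpace ℝ (Fin N)) (y₂ : EuclideanSpace ℝ (Fin N))
          (_ : y₁ ≠ y₂),
        ENNReal.ofReal
          (|f y₁ - f y₂| /
            (max (V y₁) (V y₂) * nrm (Γ⁻¹.mulVec (fun j => y₁ j - y₂ j)))) := by
  set S := ⨆ (y₁ : EuclideanSpace ℝ (Fin N)) (y₂ : EuclideanSpace ℝ (Fin N))
      (_ : y₁ ≠ y₂),
      ENNReal.ofReal
        (|f y₁ - f y₂| /
          (max (V y₁) (V y₂) * nrm (Γ⁻¹.mulVec (fun j => y₁ j - y₂ j)))) with hS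
  have hSle : ∀ (y₁ y₂ : EuclideanSpace ℝ (Fin N)), y₁ ≠ y₂ →
      ENNReal.ofReal
        (|f y₁ - f y₂| /
          (max (V y₁) (V y₂) * nrm (Γ⁻¹.mulVec (fun j => y₁ j - y₂ j)))) ≤ S :=
    fun y₁ y₂ h => le_iSup_of_le y₁ (le_iSup_of_le y₂ (le_iSup_of_le h le_rfl))
  set D : Fin N → ℝ := Γ.mulVec (fun j => fderiv ℝ f x (EuclideanSpace.single j 1)) with hD
  set d : ℝ := nrm D with hd
  rcases eq_or_lt_of_le (nrm_nonneg D) with hd0 | hdpos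
  · rw [hd, ← hd0, zero_div, ENNReal.ofReal_zero]
    exact zero_le
  have hVx : (0:ℝ) < V x := lt_of_lt_of_le zero_lt_one (hV1 x)
  set u : Fin N → ℝ := d⁻¹ • D with hu
  have hnu : nrm u = 1 := by
    rw [hu, nrm_smul, abs_of_pos (inv_pos.2 hdpos), ← hd, inv_mul_cancel₀ (ne_of_gt hdpos)]
  set W : EuclideanSpace ℝ (Fin N) := toE (Γ.mulVec u) with hW
  have hW0 : W ≠ 0 := by
    intro h
    have hmv : Γ.mulVec u = 0 := by
      funext i
      exact congrFun (congrArg (WithLp.equiv 2 (Fin N → ℝ)) h) i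
    have : u = 0 := by
      have := congrArg (Γ⁻¹.mulVec ·) hmv
      simpa [Matrix.mulVec_mulVec, Matrix.nonsing_inv_mul _ hΓinv,
        Matrix.one_mulVec, Matrix.mulVec_zero] using this
    rw [this] at hnu
    simp [nrm] at hnu
  set γ : ℝ → EuclideanSpace ℝ (Fin N) := fun t => x + t • W with hγ
  have hγ0 : γ 0 = x := by rw [hγ]; simp
  have hne : ∀ t : ℝ, 0 < t → γ t ≠ x := by
    intro t ht h
    have : t • W = 0 := by
      have := congrArg (· - x) h
      simpa [hγ] using this
    rcases smul_eq_zero.1 this with h' | h'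
    · exact absurd h' (ne_of_gt ht)
    · exact hW0 h'
  -- derivative value
  have hL : fderiv ℝ f x W = d := by
    rw [hW, key_fderiv f x hΓsymm u, ← hD]
    have : ∀ i, D i * u i = d⁻¹ * D i ^ 2 := by
      intro i; rw [hu]; simp [Pi.smul_apply, smul_eq_mul]; ring
    rw [Finset.sum_congr rfl fun i _ => this i, ← Finset.mul_sum, nrm_sq, ← hd]
    field_simp
  have hdγ : ∀ t : ℝ, HasDerivAt γ W t := fun t => by
    have h := ((hasDerivAt_id t).smul_const W).const_add x
    rw [one_smul] at h; exact h
  have hder : HasDerivAt (fun t => f (γ t)) d 0 := by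
    have := ((hf.differentiable one_ne_zero (γ 0)).hasFDerivAt).comp_hasDerivAt 0 (hdγ 0)
    rwa [hγ0, hL] at this
  have hslope : Filter.Tendsto (fun t : ℝ => (f (γ t) - f x) / t) (nhdsWithin 0 (Set.Ioi 0))
      (nhds d) := by
    have h1 := hasDerivAt_iff_tendsto_slope.1 hder
    have h2 : Filter.Tendsto (slope (fun t => f (γ t)) 0) (nhdsWithin 0 (Set.Ioi 0))
        (nhds d) := h1.mono_left (nhdsWithin_mono 0 (fun t ht => ne_of_gt ht))
    refine h2.congr fun t => ?_
    rw [slope_def_field, hγ0, sub_zero]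
  -- continuity of V
  have hVcont : ContinuousOn V Set.univ := hVconv.continuousOn isOpen_univ
  have hγcont : Continuous γ := continuous_const.add (continuous_id.smul continuous_const)
  have hVγ : Filter.Tendsto (fun t => V (γ t)) (nhdsWithin 0 (Set.Ioi 0)) (nhds (V x)) := by
    have hcx : ContinuousAt V x := hVcont.continuousAt (isOpen_univ.mem_nhds (Set.mem_univ x))
    have hcx' : ContinuousAt V (γ 0) := by rwa [hγ0]
    have hcomp : Filter.Tendsto (fun t => V (γ t)) (nhds 0) (nhds (V (γ 0))) :=
      (hcx'.comp (hγcont.continuousAt (x := (0:ℝ)))).tendsto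
    rw [hγ0] at hcomp
    exact hcomp.mono_left nhdsWithin_le_nhds
  have hM : Filter.Tendsto (fun t => max (V (γ t)) (V x)) (nhdsWithin 0 (Set.Ioi 0))
      (nhds (V x)) := by
    have := hVγ.max (tendsto_const_nhds (x := V x) (f := nhdsWithin (0:ℝ) (Set.Ioi 0)))
    rwa [max_self] at this
  -- the main limit
  have htend : Filter.Tendsto
      (fun t : ℝ => |f (γ t) - f x| / (max (V (γ t)) (V x) * t))
      (nhdsWithin 0 (Set.Ioi 0)) (nhds (d / V x)) := by
    have habs : Filter.Tendsto (fun t : ℝ => |(f (γ t) - f x) / t|)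
        (nhdsWithin 0 (Set.Ioi 0)) (nhds d) := by
      have := hslope.abs
      rwa [abs_of_pos hdpos] at this
    have hdiv := habs.div hM (ne_of_gt hVx)
    refine hdiv.congr' ?_
    filter_upwards [self_mem_nhdsWithin] with t ht
    have ht' : (0:ℝ) < t := ht
    have hMpos : (0:ℝ) < max (V (γ t)) (V x) :=
      lt_of_lt_of_le zero_lt_one (le_trans (hV1 x) (le_max_right _ _))
    simp only [Pi.div_apply]
    rw [abs_div, abs_of_pos ht', div_div, mul_comm t]
  -- terms equal RHS terms
  have hterm : ∀ t : ℝ, 0 < t →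
      ENNReal.ofReal (|f (γ t) - f x| / (max (V (γ t)) (V x) * t)) ≤ S := by
    intro t ht
    have hcoord : (fun j => γ t j - x j) = t • Γ.mulVec u := by
      funext j
      show (x + t • W) j - x j = t * (Γ.mulVec u) j
      have : (x + t • W) j = x j + t * W j := rfl
      rw [this]
      have : W j = (Γ.mulVec u) j := rfl
      rw [this]; ring
    have hnrm : nrm (Γ⁻¹.mulVec (fun j => γ t j - x j)) = t := by
      rw [hcoord, Matrix.mulVec_smul, Matrix.mulVec_mulVec,
        Matrix.nonsing_inv_mul _ hΓinv, Matrix.one_mulVec, nrm_smul, hnu,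
        abs_of_pos ht, mul_one]
    have := hSle (γ t) x (hne t ht)
    rwa [hnrm] at this
  -- conclude
  have hofReal : Filter.Tendsto
      (fun t : ℝ => ENNReal.ofReal (|f (γ t) - f x| / (max (V (γ t)) (V x) * t)))
      (nhdsWithin 0 (Set.Ioi 0)) (nhds (ENNReal.ofReal (d / V x))) :=
    (ENNReal.continuous_ofReal.tendsto _).comp htend
  refine le_of_tendsto hofReal ?_
  filter_upwards [self_mem_nhdsWithin] with t ht
  exact hterm t ht

end Aux4

theorem weighted_gradient_sup_eq_lipschitz_sup
    (N : ℕ)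
    (V : EuclideanSpace ℝ (Fin N) → ℝ)
    (hV1 : ∀ x, 1 ≤ V x)
    (hVconv : ConvexOn ℝ Set.univ V)
    (Γ : Matrix (Fin N) (Fin N) ℝ) (hΓsymm : Γ.IsSymm) (hΓinv : IsUnit Γ.det)
    (f : EuclideanSpace ℝ (Fin N) → ℝ) (hf : ContDiff ℝ 1 f) :
    (⨆ x : EuclideanSpace ℝ (Fin N),
        ENNReal.ofReal
          (Real.sqrt (∑ i,
              (Γ.mulVec (fun j => fderiv ℝ f x (EuclideanSpace.single j 1)) i) ^ 2)
            / V x)) =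
      ⨆ (y₁ : EuclideanSpace ℝ (Fin N)) (y₂ : EuclideanSpace ℝ (Fin N))
          (_ : y₁ ≠ y₂),
        ENNReal.ofReal
          (|f y₁ - f y₂| /
            (max (V y₁) (V y₂) *
              Real.sqrt (∑ i, (Γ⁻¹.mulVec (fun j => y₁ j - y₂ j) i) ^ 2))) := by
  have hL : ∀ x : EuclideanSpace ℝ (Fin N),
      Real.sqrt (∑ i,
          (Γ.mulVec (fun j => fderiv ℝ f x (EuclideanSpace.single j 1)) i) ^ 2)
        = nrm (Γ.mulVec (fun j => fderiv ℝ f x (EuclideanSpace.single j 1))) :=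
    fun x => rfl
  have hR : ∀ y₁ y₂ : EuclideanSpace ℝ (Fin N),
      Real.sqrt (∑ i, (Γ⁻¹.mulVec (fun j => y₁ j - y₂ j) i) ^ 2)
        = nrm (Γ⁻¹.mulVec (fun j => y₁ j - y₂ j)) := fun _ _ => rfl
  simp only [hL, hR]
  apply le_antisymm
  · exact iSup_le fun x => part1 V hV1 hVconv hΓsymm hΓinv f hf x
  · refine iSup_le fun y₁ => iSup_le fun y₂ => iSup_le fun hne => ?_
    set M := ⨆ x : EuclideanSpace ℝ (Fin N),
        ENNReal.ofReal
          (nrm (Γ.mulVec (fun j => fderiv ℝ f x (EuclideanSpace.single j 1))) / V x)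
      with hM
    by_cases hMtop : M = ⊤
    · rw [hMtop]; exact le_top
    set C : ℝ := M.toReal with hC
    have hC0 : 0 ≤ C := ENNReal.toReal_nonneg
    have hbound : ∀ x, nrm (Γ.mulVec (fun j => fderiv ℝ f x (EuclideanSpace.single j 1)))
        ≤ C * V x := by
      intro x
      have h1 : ENNReal.ofReal
          (nrm (Γ.mulVec (fun j => fderiv ℝ f x (EuclideanSpace.single j 1))) / V x) ≤ M :=
        le_iSup (fun x => ENNReal.ofReal
          (nrm (Γ.mulVec (fun j => fderiv ℝ f x (EuclideanSpace.single j 1))) / V x)) x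
      have h2 := (ENNReal.ofReal_le_iff_le_toReal hMtop).1 h1
      have hVx : (0:ℝ) < V x := lt_of_lt_of_le zero_lt_one (hV1 x)
      rwa [div_le_iff₀ hVx] at h2
    have hmain := mvt_bound V hVconv hΓsymm hΓinv f hf C hC0 hbound y₁ y₂
    -- positivity of the denominator
    have hw0 : nrm (Γ⁻¹.mulVec (fun j => y₁ j - y₂ j)) ≠ 0 := by
      intro h
      have hw := (nrm_eq_zero_iff _).1 h
      have : (fun j => y₁ j - y₂ j) = 0 := by
        have := congrArg (Γ.mulVec ·) hw
        simpa [Matrix.mulVec_mulVec, Matrix.mul_nonsing_inv _ hΓinv,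
          Matrix.one_mulVec, Matrix.mulVec_zero] using this
      apply hne
      ext j
      have := congrFun this j
      simpa [sub_eq_zero] using this
    have hwpos : 0 < nrm (Γ⁻¹.mulVec (fun j => y₁ j - y₂ j)) :=
      lt_of_le_of_ne (nrm_nonneg _) (Ne.symm hw0)
    have hMVpos : (0:ℝ) < max (V y₁) (V y₂) :=
      lt_of_lt_of_le zero_lt_one (le_trans (hV1 y₁) (le_max_left _ _))
    have hdiv : |f y₁ - f y₂| /
        (max (V y₁) (V y₂) * nrm (Γ⁻¹.mulVec (fun j => y₁ j - y₂ j))) ≤ C := by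
      rw [div_le_iff₀ (mul_pos hMVpos hwpos)]
      calc |f y₁ - f y₂| ≤ C * max (V y₁) (V y₂) * nrm (Γ⁻¹.mulVec (fun j => y₁ j - y₂ j)) :=
            hmain
        _ = C * (max (V y₁) (V y₂) * nrm (Γ⁻¹.mulVec (fun j => y₁ j - y₂ j))) := by ring
    calc ENNReal.ofReal (|f y₁ - f y₂| /
          (max (V y₁) (V y₂) * nrm (Γ⁻¹.mulVec (fun j => y₁ j - y₂ j))))
        ≤ ENNReal.ofReal C := ENNReal.ofReal_le_ofReal hdiv
      _ = M := ENNReal.ofReal_toReal hMtop
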